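/- Let ψ̃_μ(x) = Σ_{i∈[n]} ψ_i(x) μ_i where ψ_i are GMM membership weights. Then the Jacobian satisfies ∇_x ψ̃_μ(x) = (1/2) Σ_{i,j∈[n]} ψ_i(x) ψ_j(x) (μ_i − μ_j)(μ_i − μ_j)^T; in particular ∇_x ψ̃_μ(x) is positive semi-definite. -/

import Mathlib

open MeasureTheory ProbabilityTheory Real Finset
open scoped RealInnerProductSpace BigOperators ENNReal NNReal

noncomputable def stdGaussian (d : ℕ) : Measure (EuclideanSpace ℝ (Fin d)) :=
  (Measure.pi fun _ : Fin d => gaussianReal 0 1).map ⇑(EuclideanSpace.equiv (Fin d) ℝ).symm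

noncomputable def gmmPsi {d n : ℕ} (w : Fin n → ℝ) (μ : Fin n → EuclideanSpace ℝ (Fin d))
    (i : Fin n) (x : EuclideanSpace ℝ (Fin d)) : ℝ :=
  w i * Real.exp (-‖x - μ i‖ ^ 2 / 2) / ∑ k, w k * Real.exp (-‖x - μ k‖ ^ 2 / 2)

noncomputable def psiTilde {d n : ℕ} (w : Fin n → ℝ) (μ : Fin n → EuclideanSpace ℝ (Fin d))
    (x : EuclideanSpace ℝ (Fin d)) : EuclideanSpace ℝ (Fin d) :=
  ∑ i, gmmPsi w μ i x • μ i

noncomputable def gmmPdf {d n : ℕ} (w : Fin n → ℝ) (μ : Fin n → EuclideanSpace ℝ (Fin d))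
    (x : EuclideanSpace ℝ (Fin d)) : ℝ :=
  ∑ i, w i * ((2 * Real.pi) ^ (-(d : ℝ) / 2) * Real.exp (-‖x - μ i‖ ^ 2 / 2))

noncomputable def gmmLoss {d n : ℕ} (w : Fin n → ℝ) (μ : Fin n → EuclideanSpace ℝ (Fin d)) : ℝ :=
  -∫ x, Real.log (gmmPdf w μ x / ((2 * Real.pi) ^ (-(d : ℝ) / 2) * Real.exp (-‖x‖ ^ 2 / 2)))
      ∂ stdGaussian d

noncomputable def gmmGrad {d n : ℕ} (w : Fin n → ℝ) (μ : Fin n → EuclideanSpace ℝ (Fin d))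
    (i : Fin n) : EuclideanSpace ℝ (Fin d) :=
  ∫ x, gmmPsi w μ i x • psiTilde w μ x ∂ stdGaussian d

section Aux

set_option linter.unnecessarySeqFocus false

lemma hasFDerivAt_wexp {d : ℕ} (c : ℝ) (m x : EuclideanSpace ℝ (Fin d)) :
    HasFDerivAt (fun y : EuclideanSpace ℝ (Fin d) => c * Real.exp (-‖y - m‖ ^ 2 / 2))
      ((c * Real.exp (-‖x - m‖ ^ 2 / 2)) • innerSL ℝ (m - x)) x := by
  have h1 : HasFDerivAt (fun y : EuclideanSpace ℝ (Fin d) => ‖y - m‖ ^ 2)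
      ((2 : ℕ) • (innerSL ℝ x - innerSL ℝ m)) x := by
    simpa using ((hasFDerivAt_id x).sub_const m).norm_sq
  have h2 : HasFDerivAt (fun y : EuclideanSpace ℝ (Fin d) => -‖y - m‖ ^ 2 / 2)
      (innerSL ℝ (m - x)) x := by
    have hfe : (fun y : EuclideanSpace ℝ (Fin d) => -‖y - m‖ ^ 2 / 2)
        = fun y => (-(2:ℝ)⁻¹) • ‖y - m‖ ^ 2 := by
      funext y; simp [smul_eq_mul]; ring
    have hde : innerSL ℝ (m - x)
        = (-(2:ℝ)⁻¹) • ((2 : ℕ) • (innerSL ℝ x - innerSL ℝ m)) := by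
      ext y
      simp [inner_sub_left]
    rw [hfe, hde]
    exact h1.const_smul (-(2:ℝ)⁻¹)
  have h4 := (h2.exp).const_mul c
  simpa [smul_smul] using h4

lemma hasFDerivAt_gmmPsi {d n : ℕ} (w : Fin n → ℝ) (μ : Fin n → EuclideanSpace ℝ (Fin d))
    (hw : ∀ i, 0 < w i) (hn : n ≠ 0) (i : Fin n) (x : EuclideanSpace ℝ (Fin d)) :
    HasFDerivAt (gmmPsi w μ i)
      (gmmPsi w μ i x • innerSL ℝ (μ i - x)
        - gmmPsi w μ i x • ∑ k, gmmPsi w μ k x • innerSL ℝ (μ k - x)) x := by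
  have hne : Nonempty (Fin n) := ⟨⟨0, Nat.pos_of_ne_zero hn⟩⟩
  have hZpos : ∀ y : EuclideanSpace ℝ (Fin d),
      0 < ∑ k, w k * Real.exp (-‖y - μ k‖ ^ 2 / 2) := fun y =>
    Finset.sum_pos (fun k _ => mul_pos (hw k) (Real.exp_pos _)) univ_nonempty
  set Zx : ℝ := ∑ k, w k * Real.exp (-‖x - μ k‖ ^ 2 / 2) with hZx
  have hZd : HasFDerivAt (fun y : EuclideanSpace ℝ (Fin d) =>
        ∑ k, w k * Real.exp (-‖y - μ k‖ ^ 2 / 2))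
      (∑ k, (w k * Real.exp (-‖x - μ k‖ ^ 2 / 2)) • innerSL ℝ (μ k - x)) x :=
    HasFDerivAt.fun_sum fun k _ => hasFDerivAt_wexp (w k) (μ k) x
  have hZinv : HasFDerivAt (fun y : EuclideanSpace ℝ (Fin d) =>
        (∑ k, w k * Real.exp (-‖y - μ k‖ ^ 2 / 2))⁻¹)
      ((-(Zx ^ 2)⁻¹) • ∑ k, (w k * Real.exp (-‖x - μ k‖ ^ 2 / 2)) • innerSL ℝ (μ k - x)) x :=
    (hasDerivAt_inv (hZpos x).ne').comp_hasFDerivAt x hZd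
  have h := (hasFDerivAt_wexp (w i) (μ i) x).fun_mul hZinv
  have hfe : (fun y : EuclideanSpace ℝ (Fin d) =>
      (w i * Real.exp (-‖y - μ i‖ ^ 2 / 2)) * (∑ k, w k * Real.exp (-‖y - μ k‖ ^ 2 / 2))⁻¹)
      = gmmPsi w μ i := by
    funext y; simp [gmmPsi, div_eq_mul_inv]
  rw [hfe, ← hZx] at h
  have hS : ∑ k, gmmPsi w μ k x • innerSL ℝ (μ k - x)
      = Zx⁻¹ • ∑ k, (w k * Real.exp (-‖x - μ k‖ ^ 2 / 2)) • innerSL ℝ (μ k - x) := by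
    rw [Finset.smul_sum]
    refine Finset.sum_congr rfl fun k _ => ?_
    rw [smul_smul, gmmPsi, ← hZx, div_eq_inv_mul]
  have hde : ((w i * Real.exp (-‖x - μ i‖ ^ 2 / 2)) •
        ((-(Zx ^ 2)⁻¹) • ∑ k, (w k * Real.exp (-‖x - μ k‖ ^ 2 / 2)) • innerSL ℝ (μ k - x)) +
      Zx⁻¹ • (w i * Real.exp (-‖x - μ i‖ ^ 2 / 2)) • innerSL ℝ (μ i - x))
      = (gmmPsi w μ i x • innerSL ℝ (μ i - x)
        - gmmPsi w μ i x • ∑ k, gmmPsi w μ k x • innerSL ℝ (μ k - x)) := by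
    have hZ0 : Zx ≠ 0 := (hZpos x).ne'
    rw [hS]
    rw [show gmmPsi w μ i x = w i * Real.exp (-‖x - μ i‖ ^ 2 / 2) / Zx from by
      rw [gmmPsi, ← hZx]]
    generalize (∑ k, (w k * Real.exp (-‖x - μ k‖ ^ 2 / 2)) • innerSL ℝ (μ k - x)
        : EuclideanSpace ℝ (Fin d) →L[ℝ] ℝ) = S
    generalize innerSL ℝ (μ i - x) = Li
    match_scalars <;> field_simp <;> left <;> ring
  rw [hde] at h
  exact h

lemma key_swap {n : ℕ} {M : Type*} [AddCommGroup M] [Module ℝ M]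
    (ψ b : Fin n → ℝ) (μ : Fin n → M) (hψ : ∑ k, ψ k = 1) :
    ∑ i, (ψ i * b i - ψ i * ∑ k, ψ k * b k) • μ i
      = (1 / 2 : ℝ) • ∑ i, ∑ j, (ψ i * ψ j * (b i - b j)) • (μ i - μ j) := by
  have hswap : ∑ i, ∑ j, (ψ i * ψ j * (b i - b j)) • μ j
      = - ∑ i, ∑ j, (ψ i * ψ j * (b i - b j)) • μ i := by
    rw [Finset.sum_comm, ← Finset.sum_neg_distrib]
    refine Finset.sum_congr rfl fun i _ => ?_
    rw [← Finset.sum_neg_distrib]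
    refine Finset.sum_congr rfl fun j _ => ?_
    rw [← neg_smul]
    congr 1
    ring
  have h1 : ∑ i, ∑ j, (ψ i * ψ j * (b i - b j)) • (μ i - μ j)
      = (2 : ℝ) • ∑ i, ∑ j, (ψ i * ψ j * (b i - b j)) • μ i := by
    simp only [smul_sub, Finset.sum_sub_distrib, hswap, sub_neg_eq_add, two_smul]
  rw [h1, smul_smul]
  norm_num
  refine Finset.sum_congr rfl fun i _ => ?_
  rw [← Finset.sum_smul]
  congr 1
  have : ∀ j : Fin n, ψ i * ψ j * (b i - b j) = ψ i * b i * ψ j - ψ i * (ψ j * b j) := by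
    intro j; ring
  rw [Finset.sum_congr rfl fun j _ => this j, Finset.sum_sub_distrib, ← Finset.mul_sum,
    ← Finset.mul_sum, hψ, mul_one]

end Aux

/-- The Jacobian of `ψ̃_μ` is `(1/2) Σ_{i,j} ψ_i ψ_j (μ_i − μ_j)(μ_i − μ_j)ᵀ`, and in particular
it is positive semi-definite. -/
theorem psiTilde_jacobian {d n : ℕ} (w : Fin n → ℝ) (μ : Fin n → EuclideanSpace ℝ (Fin d))
    (hw : ∀ i, 0 < w i) (hsum : ∑ i, w i = 1)
    (x v : EuclideanSpace ℝ (Fin d)) :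
    fderiv ℝ (psiTilde w μ) x v
        = (1 / 2 : ℝ) • ∑ i, ∑ j,
            (gmmPsi w μ i x * gmmPsi w μ j x * ⟪μ i - μ j, v⟫) • (μ i - μ j)
      ∧ 0 ≤ ⟪v, fderiv ℝ (psiTilde w μ) x v⟫ := by
  have hn : n ≠ 0 := by
    rintro rfl
    simp at hsum
  have hne : Nonempty (Fin n) := ⟨⟨0, Nat.pos_of_ne_zero hn⟩⟩
  have hZpos : 0 < ∑ k, w k * Real.exp (-‖x - μ k‖ ^ 2 / 2) :=
    Finset.sum_pos (fun k _ => mul_pos (hw k) (Real.exp_pos _)) univ_nonempty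
  have hψ0 : ∀ i, 0 ≤ gmmPsi w μ i x := fun i =>
    div_nonneg (le_of_lt (mul_pos (hw i) (Real.exp_pos _))) hZpos.le
  have hψ1 : ∑ k, gmmPsi w μ k x = 1 := by
    simp only [gmmPsi]
    rw [← Finset.sum_div, div_self hZpos.ne']
  have hT : HasFDerivAt (psiTilde w μ)
      (∑ i, (gmmPsi w μ i x • innerSL ℝ (μ i - x)
          - gmmPsi w μ i x • ∑ k, gmmPsi w μ k x • innerSL ℝ (μ k - x)).smulRight (μ i)) x := by
    have h := HasFDerivAt.fun_sum (u := Finset.univ)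
      (fun i _ => (hasFDerivAt_gmmPsi w μ hw hn i x).smul_const (μ i))
    exact h
  have hfd : fderiv ℝ (psiTilde w μ) x v
      = ∑ i, (gmmPsi w μ i x * ⟪μ i - x, v⟫
          - gmmPsi w μ i x * ∑ k, gmmPsi w μ k x * ⟪μ k - x, v⟫) • μ i := by
    rw [hT.fderiv]
    simp only [ContinuousLinearMap.coe_sum', Finset.sum_apply,
      ContinuousLinearMap.smulRight_apply, ContinuousLinearMap.coe_sub', Pi.sub_apply,
      ContinuousLinearMap.coe_smul', Pi.smul_apply, smul_eq_mul, innerSL_apply_apply]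
  have hmain : fderiv ℝ (psiTilde w μ) x v
      = (1 / 2 : ℝ) • ∑ i, ∑ j,
          (gmmPsi w μ i x * gmmPsi w μ j x * ⟪μ i - μ j, v⟫) • (μ i - μ j) := by
    rw [hfd]
    have := key_swap (fun i => gmmPsi w μ i x) (fun i => ⟪μ i - x, v⟫) μ hψ1
    rw [this]
    congr 1
    refine Finset.sum_congr rfl fun i _ => Finset.sum_congr rfl fun j _ => ?_
    congr 2
    rw [← inner_sub_left, sub_sub_sub_cancel_right]
  refine ⟨hmain, ?_⟩
  rw [hmain, real_inner_smul_right, inner_sum]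
  apply mul_nonneg (by norm_num)
  refine Finset.sum_nonneg fun i _ => ?_
  rw [inner_sum]
  refine Finset.sum_nonneg fun j _ => ?_
  rw [real_inner_smul_right]
  have : ⟪v, μ i - μ j⟫ = ⟪μ i - μ j, v⟫ := real_inner_comm _ _
  rw [this, mul_assoc]
  exact mul_nonneg (mul_nonneg (hψ0 i) (hψ0 j)) (mul_self_nonneg _)
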